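/- Let p be an odd prime, m ≥ 0 and N ≥ 1 integers, and let n₁, n₂ be coprime squarefree positive integers (coprime to p) all of whose prime divisors are ≡ 1 (mod p^N); set n := n₁n₂. Then the canonical map F_m(n₁)^×/(F_m(n₁)^×)^{p^N} → (F_m(n)^×/(F_m(n)^×)^{p^N})^{Gal(F_m(n)/F_m(n₁))} is an isomorphism (i.e., bijective). -/

import Mathlib

/-- The quotient of a commutative group `G` by the subgroup of `n`-th powers. -/
abbrev powQuot (G : Type*) [CommGroup G] (n : ℕ) : Type _ :=
  G ⧸ (powMonoidHom n : G →* G).range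

/-- The map `G/(Gⁿ) → H/(Hⁿ)` induced by a group homomorphism `f : G →* H`. -/
def powQuotMap {G H : Type*} [CommGroup G] [CommGroup H] (n : ℕ) (f : G →* H) :
    powQuot G n →* powQuot H n :=
  QuotientGroup.map _ _ f (by
    rintro x ⟨y, rfl⟩
    exact ⟨f y, by simp [powMonoidHom, map_pow]⟩)

/-- `Fmn p m n` is the maximal totally real subfield of `ℚ(μ_{p^{m+1} n}) ⊂ ℂ`, realized as
the intersection of the subfield of `ℂ` generated by the `p^{m+1}n`-th roots of unity with
the real numbers (the fixed field of complex conjugation). -/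
noncomputable def Fmn (p m n : ℕ) : Subfield ℂ :=
  Subfield.closure {z : ℂ | z ^ (p ^ (m + 1) * n) = 1} ⊓ Complex.ofRealHom.fieldRange

/-- Monotonicity of `Fmn` in the conductor. -/
lemma Fmn_le (p : ℕ) {m₁ m₂ a b : ℕ} (h : p ^ (m₁ + 1) * a ∣ p ^ (m₂ + 1) * b) :
    Fmn p m₁ a ≤ Fmn p m₂ b := by
  refine inf_le_inf_right _ (Subfield.closure_mono ?_)
  rintro z hz
  obtain ⟨c, hc⟩ := h
  simp only [Set.mem_setOf_eq] at hz ⊢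
  rw [hc, pow_mul, hz, one_pow]

section Abstract

variable {L M : Type*} [Field L] [Field M] [Algebra L M]

lemma fixed_mem_range [FiniteDimensional L M] [IsGalois L M] {x : M}
    (hx : ∀ σ : M ≃ₐ[L] M, σ x = x) : ∃ y : L, algebraMap L M y = x := by
  have h : x ∈ (⊥ : IntermediateField L M) := by
    rw [← IsGalois.fixedField_fixingSubgroup (⊥ : IntermediateField L M)]
    intro σ
    exact hx σ.1
  rwa [IntermediateField.mem_bot] at h

lemma fixed_unit [FiniteDimensional L M] [IsGalois L M] {w : Mˣ}
    (hw : ∀ σ : M ≃ₐ[L] M, σ (w : M) = w) :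
    ∃ u : Lˣ, Units.map (algebraMap L M).toMonoidHom u = w := by
  obtain ⟨y, hy⟩ := fixed_mem_range hw
  have hy0 : y ≠ 0 := by
    rintro rfl
    exact w.ne_zero (by simpa using hy.symm)
  exact ⟨Units.mk0 y hy0, Units.ext (by simpa using hy)⟩

theorem keyLemma (q : ℕ) [FiniteDimensional L M] [IsGalois L M]
    (hq : ∀ x : M, x ^ q = 1 → x = 1) :
    Function.Injective (powQuotMap q (Units.map (algebraMap L M).toMonoidHom)) ∧
    Set.range (powQuotMap q (Units.map (algebraMap L M).toMonoidHom)) =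
      {y : powQuot Mˣ q | ∀ σ : M ≃+* M,
        (∀ x : L, σ (algebraMap L M x) = algebraMap L M x) →
        powQuotMap q (Units.map σ.toRingHom.toMonoidHom) y = y} := by
  have hrootM : ∀ x y : M, x ^ q = y ^ q → y ≠ 0 → x = y := by
    intro x y h hy
    have : (x / y) ^ q = 1 := by
      rw [div_pow, h, div_self (pow_ne_zero _ hy)]
    have := hq _ this
    field_simp at this
    exact this
  have hroot : ∀ a b : Mˣ, a ^ q = b ^ q → a = b := by
    intro a b h
    refine Units.ext (hrootM _ _ ?_ b.ne_zero)
    exact_mod_cast congrArg (Units.val) h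
  set f : Lˣ →* Mˣ := Units.map (algebraMap L M).toMonoidHom with hf
  have hfval : ∀ u : Lˣ, ((f u : M)) = algebraMap L M u := fun u => rfl
  have hinj : Function.Injective (powQuotMap q f) := by
    rw [injective_iff_map_eq_one]
    intro y hy
    induction y using QuotientGroup.induction_on with
    | H u =>
      rw [show (powQuotMap q f) ((u : powQuot Lˣ q)) = ((f u : Mˣ) : powQuot Mˣ q) from rfl,
        QuotientGroup.eq_one_iff] at hy
      obtain ⟨w, hw⟩ := hy
      have hwq : w ^ q = f u := hw
      have hwfix : ∀ σ : M ≃ₐ[L] M, σ (w : M) = w := by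
        intro σ
        refine hrootM _ _ ?_ w.ne_zero
        have hval : ((w : M)) ^ q = algebraMap L M u := by
          rw [← hfval u, ← hwq]; norm_cast
        rw [← map_pow, hval, σ.commutes]
      obtain ⟨u', hu'⟩ := fixed_unit hwfix
      have hfu : f (u' ^ q) = f u := by rw [map_pow, hu', hwq]
      have hu : u' ^ q = u :=
        Units.map_injective (algebraMap L M).injective hfu
      rw [QuotientGroup.eq_one_iff]
      exact ⟨u', hu⟩
  refine ⟨hinj, ?_⟩
  ext y
  simp only [Set.mem_range, Set.mem_setOf_eq]
  constructor
  · rintro ⟨x, rfl⟩ σ hσ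
    induction x using QuotientGroup.induction_on with
    | H u =>
      show ((Units.map σ.toRingHom.toMonoidHom (f u) : Mˣ) : powQuot Mˣ q) = _
      congr 1
      refine Units.ext ?_
      show σ (algebraMap L M u) = algebraMap L M u
      exact hσ u
  · intro hy
    induction y using QuotientGroup.induction_on with
    | H w =>
      have hspec : ∀ σ : M ≃ₐ[L] M,
          ∃ z : Mˣ, z ^ q = Units.map (σ : M →* M) w / w := by
        intro σ
        have h := hy σ.toRingEquiv (fun x => σ.commutes x)
        rw [show (powQuotMap q (Units.map σ.toRingEquiv.toRingHom.toMonoidHom))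
            ((w : powQuot Mˣ q)) = ((Units.map (σ : M →* M) w : Mˣ) : powQuot Mˣ q) from rfl,
          QuotientGroup.eq] at h
        obtain ⟨z, hz⟩ := h
        refine ⟨z⁻¹, ?_⟩
        have hz' : z ^ q = (Units.map (σ : M →* M) w)⁻¹ * w := hz
        rw [inv_pow, hz', mul_inv, inv_inv, ← div_eq_mul_inv]
      choose g hg using hspec
      have hcoc : groupCohomology.IsMulCocycle₁ g := by
        intro σ τ
        refine hroot _ _ ?_
        have h1 : Units.map ((σ * τ : M ≃ₐ[L] M) : M →* M) w
            = Units.map (σ : M →* M) (Units.map (τ : M →* M) w) := Units.ext rfl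
        rw [hg (σ * τ), mul_pow, AlgEquiv.smul_units_def, ← map_pow, hg τ, hg σ, map_div,
          h1, div_mul_div_cancel]
      obtain ⟨β, hβ⟩ :=
        groupCohomology.isMulCoboundary₁_of_isMulCocycle₁_of_aut_to_units g hcoc
      set w' : Mˣ := w / β ^ q with hw'
      have hfixw' : ∀ σ : M ≃ₐ[L] M, Units.map (σ : M →* M) w' = w' := by
        intro σ
        have h2 : Units.map (σ : M →* M) β = g σ * β := by
          rw [← hβ σ, AlgEquiv.smul_units_def, div_mul_cancel]
        have h3 : Units.map (σ : M →* M) w = g σ ^ q * w := by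
          rw [hg σ, div_mul_cancel]
        rw [hw', map_div, map_pow, h2, h3, mul_pow, mul_div_mul_left_eq_div]
      have hfix : ∀ σ : M ≃ₐ[L] M, σ ((w' : Mˣ) : M) = w' := by
        intro σ
        exact congrArg Units.val (hfixw' σ)
      obtain ⟨u, hu⟩ := fixed_unit hfix
      refine ⟨(u : powQuot Lˣ q), ?_⟩
      rw [show (powQuotMap q f) ((u : powQuot Lˣ q)) = ((f u : Mˣ) : powQuot Mˣ q) from rfl,
        hu, QuotientGroup.eq]
      exact ⟨β, by show β ^ q = w'⁻¹ * w; rw [hw', inv_div, div_mul_cancel]⟩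

end Abstract

open IntermediateField Polynomial

set_option maxHeartbeats 1000000
set_option synthInstance.maxHeartbeats 200000

noncomputable section

theorem step1 (k : ℕ) (hk : k ≠ 0) : ({z : ℂ | z ^ k = 1} : Set ℂ).Finite := by
  refine (Polynomial.finite_setOf_isRoot (p := (X : ℂ[X]) ^ k - C 1)
    (X_pow_sub_C_ne_zero (Nat.pos_of_ne_zero hk) 1)).subset ?_
  intro z hz
  simp only [Set.mem_setOf_eq] at hz ⊢
  simp [Polynomial.IsRoot, hz]

theorem step2 (k : ℕ) (L : Subfield ℂ) (hk : k ≠ 0) :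
    ∀ x ∈ {z : ℂ | z ^ k = 1}, IsIntegral ↥L x := by
  intro x hx
  refine ⟨(X : (↥L)[X]) ^ k - C 1, monic_X_pow_sub_C _ hk, ?_⟩
  simp only [Set.mem_setOf_eq] at hx
  simp [hx]

theorem step3 (k : ℕ) (L : Subfield ℂ) (hk : k ≠ 0) :
    (((X : (↥L)[X]) ^ k - C 1).rootSet ℂ) = {z : ℂ | z ^ k = 1} := by
  haveI : NoZeroSMulDivisors ↥L ℂ :=
    inferInstance
  ext z
  rw [Polynomial.mem_rootSet]
  constructor
  · rintro ⟨-, h⟩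
    simpa [sub_eq_zero] using h
  · intro hz
    simp only [Set.mem_setOf_eq] at hz
    exact ⟨X_pow_sub_C_ne_zero (Nat.pos_of_ne_zero hk) 1, by simpa [sub_eq_zero] using hz⟩

theorem step4 (k : ℕ) (L : Subfield ℂ) (hk : k ≠ 0) :
    IsSplittingField ↥L ↥(adjoin ↥L {z : ℂ | z ^ k = 1}) ((X : (↥L)[X]) ^ k - C 1) := by
  have h := adjoin_rootSet_isSplittingField (K := ↥L) (L := ℂ)
    (p := (X : (↥L)[X]) ^ k - C 1) (IsAlgClosed.splits _)
  rwa [step3 k L hk] at h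

theorem step5 (k : ℕ) (L : Subfield ℂ) (hk : k ≠ 0) :
    FiniteDimensional ↥L ↥(adjoin ↥L {z : ℂ | z ^ k = 1}) := by
  haveI : Finite ↥({z : ℂ | z ^ k = 1}) := (step1 k hk).to_subtype
  exact finiteDimensional_adjoin (step2 k L hk)

theorem step6 (k : ℕ) (L : Subfield ℂ) (hk : k ≠ 0) :
    Normal ↥L ↥(adjoin ↥L {z : ℂ | z ^ k = 1}) := by
  haveI := step4 k L hk
  exact Normal.of_isSplittingField ((X : (↥L)[X]) ^ k - C 1)

-- the key power lemma
theorem step7 (k : ℕ) (L : Subfield ℂ) (hk : k ≠ 0)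
    (σ : ↥(adjoin ↥L {z : ℂ | z ^ k = 1}) →ₐ[↥L] ↥(adjoin ↥L {z : ℂ | z ^ k = 1})) :
    ∃ a : ℕ, ∀ z (hz : z ∈ {z : ℂ | z ^ k = 1}),
      σ ⟨z, subset_adjoin _ _ hz⟩ = ⟨z, subset_adjoin _ _ hz⟩ ^ a := by
  haveI : NeZero k := ⟨hk⟩
  have hζ := Complex.isPrimitiveRoot_exp k hk
  set ζ : ℂ := Complex.exp (2 * Real.pi * Complex.I / k) with hζdef
  have hζS : ζ ∈ {z : ℂ | z ^ k = 1} := hζ.pow_eq_one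
  set ζK : ↥(adjoin ↥L {z : ℂ | z ^ k = 1}) := ⟨ζ, subset_adjoin _ _ hζS⟩ with hζK
  have hζKk : ζK ^ k = 1 := by
    ext
    push_cast
    exact hζS
  have h1 : ((σ ζK : ↥(adjoin ↥L {z : ℂ | z ^ k = 1})) : ℂ) ^ k = 1 := by
    have : σ ζK ^ k = 1 := by rw [← map_pow, hζKk, map_one]
    calc ((σ ζK : _) : ℂ) ^ k = ((σ ζK ^ k : _) : ℂ) := by push_cast; ring
    _ = 1 := by rw [this]; rfl
  obtain ⟨a, -, ha⟩ := hζ.eq_pow_of_pow_eq_one h1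
  refine ⟨a, fun z hz => ?_⟩
  obtain ⟨i, -, hi⟩ := hζ.eq_pow_of_pow_eq_one hz
  have hσζ : σ ζK = ζK ^ a := by
    ext
    push_cast
    exact ha.symm
  have hzK : (⟨z, subset_adjoin _ _ hz⟩ : ↥(adjoin ↥L {z : ℂ | z ^ k = 1})) = ζK ^ i := by
    ext
    push_cast
    exact hi.symm
  rw [hzK, map_pow, hσζ, ← pow_mul, mul_comm, pow_mul]

-- commutativity of the Galois group
theorem step8 (k : ℕ) (L : Subfield ℂ) (hk : k ≠ 0)
    (σ τ : ↥(adjoin ↥L {z : ℂ | z ^ k = 1}) ≃ₐ[↥L] ↥(adjoin ↥L {z : ℂ | z ^ k = 1}))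
    (x : ↥(adjoin ↥L {z : ℂ | z ^ k = 1})) : σ (τ x) = τ (σ x) := by
  obtain ⟨a, ha⟩ := step7 k L hk σ.toAlgHom
  obtain ⟨b, hb⟩ := step7 k L hk τ.toAlgHom
  have h : σ.toAlgHom.comp τ.toAlgHom = τ.toAlgHom.comp σ.toAlgHom := by
    refine adjoin_algHom_ext ↥L (fun z hz => ?_)
    simp only [AlgHom.comp_apply]
    rw [hb z hz, map_pow, ha z hz, map_pow, hb z hz, ← pow_mul, mul_comm, pow_mul]
  exact DFunLike.congr_fun h x

theorem conjL (k : ℕ) (L : Subfield ℂ)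
    (hL : L ≤ Subfield.closure {z : ℂ | z ^ k = 1} ⊓ Complex.ofRealHom.fieldRange)
    (x : ↥L) : (starRingEnd ℂ) (x : ℂ) = x := by
  obtain ⟨r, hr⟩ := (hL x.2).2
  rw [← hr]
  exact Complex.conj_ofReal r

theorem conjMem (k : ℕ) (L : Subfield ℂ)
    (hL : L ≤ Subfield.closure {z : ℂ | z ^ k = 1} ⊓ Complex.ofRealHom.fieldRange) :
    ∀ z ∈ adjoin ↥L {z : ℂ | z ^ k = 1}, (starRingEnd ℂ) z ∈ adjoin ↥L {z : ℂ | z ^ k = 1} := by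
  intro z hz
  induction hz using IntermediateField.adjoin_induction with
  | mem x hx =>
    refine subset_adjoin _ _ ?_
    simp only [Set.mem_setOf_eq] at hx ⊢
    rw [← map_pow, hx, map_one]
  | algebraMap x =>
    rw [show algebraMap ↥L ℂ x = (x : ℂ) from rfl, conjL k L hL x]
    exact (adjoin ↥L {z : ℂ | z ^ k = 1}).algebraMap_mem x
  | add x y hx hy ihx ihy =>
    rw [map_add]
    exact add_mem ihx ihy
  | inv x hx ih =>
    rw [map_inv₀]
    exact inv_mem ih
  | mul x y hx hy ihx ihy =>
    rw [map_mul]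
    exact mul_mem ihx ihy

/-- complex conjugation as an `L`-algebra automorphism of the cyclotomic field -/
def conjAut (k : ℕ) (L : Subfield ℂ)
    (hL : L ≤ Subfield.closure {z : ℂ | z ^ k = 1} ⊓ Complex.ofRealHom.fieldRange) :
    ↥(adjoin ↥L {z : ℂ | z ^ k = 1}) ≃ₐ[↥L] ↥(adjoin ↥L {z : ℂ | z ^ k = 1}) := by
  refine AlgEquiv.ofBijective
    { toFun := fun x => ⟨(starRingEnd ℂ) (x : ℂ), conjMem k L hL _ x.2⟩
      map_one' := by ext; simp
      map_mul' := fun x y => by ext; simp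
      map_zero' := by ext; simp
      map_add' := fun x y => by ext; simp
      commutes' := fun x => by
        ext
        exact conjL k L hL x }
    (Function.Involutive.bijective ?_)
  intro x
  ext
  exact Complex.conj_conj _

theorem conjAut_apply (k : ℕ) (L : Subfield ℂ)
    (hL : L ≤ Subfield.closure {z : ℂ | z ^ k = 1} ⊓ Complex.ofRealHom.fieldRange)
    (x : ↥(adjoin ↥L {z : ℂ | z ^ k = 1})) :
    (conjAut k L hL x : ℂ) = (starRingEnd ℂ) (x : ℂ) := rfl

theorem real_iff (k : ℕ) (L : Subfield ℂ)
    (hL : L ≤ Subfield.closure {z : ℂ | z ^ k = 1} ⊓ Complex.ofRealHom.fieldRange)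
    (x : ↥(adjoin ↥L {z : ℂ | z ^ k = 1})) :
    (x : ℂ) ∈ Complex.ofRealHom.fieldRange ↔ conjAut k L hL x = x := by
  constructor
  · rintro ⟨r, hr⟩
    ext
    rw [conjAut_apply, ← hr]
    exact Complex.conj_ofReal r
  · intro h
    have h' : (starRingEnd ℂ) (x : ℂ) = (x : ℂ) := by
      rw [← conjAut_apply k L hL, h]
    rw [Complex.conj_eq_iff_im] at h'
    exact ⟨(x : ℂ).re, Complex.ext rfl h'.symm⟩

/-- the real subfield as an intermediate field of the cyclotomic field -/
def MI (k : ℕ) (L : Subfield ℂ)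
    (hL : L ≤ Subfield.closure {z : ℂ | z ^ k = 1} ⊓ Complex.ofRealHom.fieldRange) :
    IntermediateField ↥L ↥(adjoin ↥L {z : ℂ | z ^ k = 1}) :=
  Subfield.toIntermediateField
    (Subfield.comap (algebraMap ↥(adjoin ↥L {z : ℂ | z ^ k = 1}) ℂ) Complex.ofRealHom.fieldRange)
    (fun x => (hL x.2).2)

theorem mem_MI (k : ℕ) (L : Subfield ℂ)
    (hL : L ≤ Subfield.closure {z : ℂ | z ^ k = 1} ⊓ Complex.ofRealHom.fieldRange)
    (x : ↥(adjoin ↥L {z : ℂ | z ^ k = 1})) :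
    x ∈ MI k L hL ↔ (x : ℂ) ∈ Complex.ofRealHom.fieldRange := Iff.rfl

theorem normalMI (k : ℕ) (hk : k ≠ 0) (L : Subfield ℂ)
    (hL : L ≤ Subfield.closure {z : ℂ | z ^ k = 1} ⊓ Complex.ofRealHom.fieldRange) :
    Normal ↥L ↥(MI k L hL) := by
  haveI := step5 k L hk
  haveI := step6 k L hk
  rw [normal_iff_forall_map_le']
  intro σ x hx
  obtain ⟨y, hy, rfl⟩ : ∃ y ∈ MI k L hL, σ y = x := hx
  rw [mem_MI, real_iff k L hL]
  rw [mem_MI, real_iff k L hL] at hy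
  have := step8 k L hk (conjAut k L hL) σ y
  rw [hy] at this
  exact this

theorem galoisMI (k : ℕ) (hk : k ≠ 0) (L : Subfield ℂ)
    (hL : L ≤ Subfield.closure {z : ℂ | z ^ k = 1} ⊓ Complex.ofRealHom.fieldRange) :
    IsGalois ↥L ↥(MI k L hL) := by
  haveI := step5 k L hk
  haveI : FiniteDimensional ↥L ↥(MI k L hL) :=
    FiniteDimensional.of_injective (MI k L hL).val.toLinearMap Subtype.val_injective
  exact { to_isSeparable := inferInstance, to_normal := normalMI k hk L hL }

theorem main_galois (k : ℕ) (hk : k ≠ 0) (L : Subfield ℂ)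
    (hL : L ≤ Subfield.closure {z : ℂ | z ^ k = 1} ⊓ Complex.ofRealHom.fieldRange) :
    letI : Algebra ↥L ↥(Subfield.closure {z : ℂ | z ^ k = 1} ⊓ Complex.ofRealHom.fieldRange) :=
      (Subfield.inclusion hL).toAlgebra
    FiniteDimensional ↥L ↥(Subfield.closure {z : ℂ | z ^ k = 1} ⊓ Complex.ofRealHom.fieldRange) ∧
    IsGalois ↥L ↥(Subfield.closure {z : ℂ | z ^ k = 1} ⊓ Complex.ofRealHom.fieldRange) := by
  letI : Algebra ↥L ↥(Subfield.closure {z : ℂ | z ^ k = 1} ⊓ Complex.ofRealHom.fieldRange) :=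
    (Subfield.inclusion hL).toAlgebra
  have hK1 : ∀ z : ℂ, z ∈ Subfield.closure {z : ℂ | z ^ k = 1} →
      z ∈ adjoin ↥L {z : ℂ | z ^ k = 1} := fun z hz =>
    Subfield.closure_le.mpr (fun w hw =>
      (subset_adjoin ↥L {z : ℂ | z ^ k = 1} hw : w ∈ (adjoin ↥L {z : ℂ | z ^ k = 1}).toSubfield)) hz
  have hK2 : ∀ z : ℂ, z ∈ adjoin ↥L {z : ℂ | z ^ k = 1} →
      z ∈ Subfield.closure {z : ℂ | z ^ k = 1} := by
    intro z hz
    exact adjoin_le_iff (T :=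
        Subfield.toIntermediateField (Subfield.closure {z : ℂ | z ^ k = 1})
          (fun x => (hL x.2).1)).mpr
      (fun w hw => Subfield.subset_closure hw) hz
  let e : ↥(MI k L hL) ≃ₐ[↥L]
      ↥(Subfield.closure {z : ℂ | z ^ k = 1} ⊓ Complex.ofRealHom.fieldRange) :=
  { toFun := fun x => ⟨(x.1 : ℂ), Subfield.mem_inf.mpr ⟨hK2 _ x.1.2, x.2⟩⟩
    invFun := fun y => ⟨⟨(y : ℂ), hK1 _ (Subfield.mem_inf.mp y.2).1⟩, (Subfield.mem_inf.mp y.2).2⟩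
    left_inv := fun x => Subtype.ext (Subtype.ext rfl)
    right_inv := fun y => Subtype.ext rfl
    map_mul' := fun x y => Subtype.ext rfl
    map_add' := fun x y => Subtype.ext rfl
    commutes' := fun x => Subtype.ext rfl }
  haveI := step5 k L hk
  haveI : FiniteDimensional ↥L ↥(MI k L hL) :=
    FiniteDimensional.of_injective (MI k L hL).val.toLinearMap Subtype.val_injective
  haveI := galoisMI k hk L hL
  exact ⟨e.toLinearEquiv.finiteDimensional, IsGalois.of_algEquiv e⟩

end

/-- (Lemma 4.6.)  Let `p` be an odd prime, `m ≥ 0`, `N ≥ 1`, and `n₁, n₂`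
coprime squarefree positive integers coprime to `p`, all of whose prime divisors are
`≡ 1 (mod p^N)`; put `n = n₁n₂`.  Then the canonical map
`F_m(n₁)^×/p^N → (F_m(n)^×/p^N)^{Gal(F_m(n)/F_m(n₁))}` is bijective. -/
theorem statement3 (p : ℕ) (hp : p.Prime) (hpodd : Odd p) (m N : ℕ) (hN : 1 ≤ N)
    (n₁ n₂ : ℕ) (h₁ : 0 < n₁) (h₂ : 0 < n₂) (hsq₁ : Squarefree n₁) (hsq₂ : Squarefree n₂)
    (hcop : Nat.Coprime n₁ n₂) (hp₁ : ¬ p ∣ n₁) (hp₂ : ¬ p ∣ n₂)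
    (hmod : ∀ ℓ : ℕ, ℓ.Prime → ℓ ∣ n₁ * n₂ → ℓ % p ^ N = 1) :
    let ι := Subfield.inclusion
      (Fmn_le p (mul_dvd_mul_left (p ^ (m + 1)) (dvd_mul_right n₁ n₂)))
    let j := powQuotMap (p ^ N) (Units.map ι.toMonoidHom)
    Function.Injective j ∧
    Set.range j = {y : powQuot (↥(Fmn p m (n₁ * n₂)))ˣ (p ^ N) |
      ∀ σ : ↥(Fmn p m (n₁ * n₂)) ≃+* ↥(Fmn p m (n₁ * n₂)),
        (∀ x : ↥(Fmn p m n₁), σ (ι x) = ι x) →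
        powQuotMap (p ^ N) (Units.map σ.toRingHom.toMonoidHom) y = y} := by
  intro ι j
  have hk : p ^ (m + 1) * (n₁ * n₂) ≠ 0 :=
    Nat.mul_ne_zero (pow_ne_zero _ hp.pos.ne') (Nat.mul_ne_zero h₁.ne' h₂.ne')
  have hL : Fmn p m n₁ ≤ Subfield.closure {z : ℂ | z ^ (p ^ (m + 1) * (n₁ * n₂)) = 1} ⊓
      Complex.ofRealHom.fieldRange :=
    Fmn_le p (mul_dvd_mul_left (p ^ (m + 1)) (dvd_mul_right n₁ n₂))
  letI : Algebra ↥(Fmn p m n₁) ↥(Fmn p m (n₁ * n₂)) := ι.toAlgebra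
  obtain ⟨hfd, hgal⟩ := main_galois (p ^ (m + 1) * (n₁ * n₂)) hk (Fmn p m n₁) hL
  haveI : FiniteDimensional ↥(Fmn p m n₁) ↥(Fmn p m (n₁ * n₂)) := hfd
  haveI : IsGalois ↥(Fmn p m n₁) ↥(Fmn p m (n₁ * n₂)) := hgal
  have hq : ∀ x : ↥(Fmn p m (n₁ * n₂)), x ^ (p ^ N) = 1 → x = 1 := by
    intro x hx
    have hx2 : (x : ℂ) ∈ Subfield.closure {z : ℂ | z ^ (p ^ (m + 1) * (n₁ * n₂)) = 1} ⊓
        Complex.ofRealHom.fieldRange := x.2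
    obtain ⟨r, hr⟩ := (Subfield.mem_inf.mp hx2).2
    have hv : ((x : ℂ)) ^ (p ^ N) = 1 := by
      have := congrArg (Subtype.val) hx
      push_cast at this
      exact_mod_cast this
    rw [← hr, ← map_pow] at hv
    have hr1 : r ^ (p ^ N) = 1 := by
      have h1 : Complex.ofRealHom (r ^ p ^ N) = Complex.ofRealHom 1 := by
        rw [hv, map_one]
      exact Complex.ofReal_injective h1
    have hodd : Odd (p ^ N) := hpodd.pow
    have : r = 1 := by
      have := (Odd.strictMono_pow (R := ℝ) hodd).injective
        (by rw [hr1, one_pow] : r ^ (p ^ N) = 1 ^ (p ^ N))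
      exact this
    refine Subtype.ext ?_
    rw [← hr, this]
    exact map_one Complex.ofRealHom
  exact keyLemma (p ^ N) hq
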